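/- The cardinality N(n) of the n-th Farey sequence satisfies N(n) / n² → 3/π² as n → ∞. -/

import Mathlib

open Finset ArithmeticFunction Filter

/-- The n-th Farey sequence: reduced fractions in [0,1] with denominator at most n. -/
def farey (n : ℕ) : Set ℚ := {q : ℚ | 0 ≤ q ∧ q ≤ 1 ∧ q.den ≤ n}

open scoped LSeries.notation ArithmeticFunction.zeta ArithmeticFunction.Moebius in
lemma moebius_tsum_sq : ∑' d : ℕ, (moebius d : ℝ) / (d : ℝ)^2 = 6 / Real.pi^2 := by
  have hs : (1:ℝ) < (2:ℂ).re := by norm_num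
  have h1 : L ↗ζ 2 * L ↗μ 2 = 1 := LSeries_zeta_mul_Lseries_moebius hs
  have h2 : L ↗ζ 2 = riemannZeta 2 := LSeries_zeta_eq_riemannZeta hs
  have h3 : riemannZeta 2 = (Real.pi : ℂ)^2 / 6 := riemannZeta_two
  have hpi : (Real.pi : ℂ)^2 ≠ 0 := by simp [Real.pi_ne_zero]
  have h4 : L ↗μ 2 = 6 / (Real.pi : ℂ)^2 := by
    rw [h2, h3] at h1
    field_simp at h1 ⊢
    linear_combination h1
  have h5 : L ↗μ 2 = ∑' d : ℕ, Complex.ofReal ((moebius d : ℝ) / (d : ℝ)^2) := by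
    unfold LSeries
    congr 1; funext n
    rcases eq_or_ne n 0 with rfl | hn
    · simp [LSeries.term]
    · rw [LSeries.term_of_ne_zero hn, Complex.ofReal_div]
      rw [show ((2:ℂ)) = ((2:ℕ):ℂ) by norm_num, Complex.cpow_natCast]
      push_cast
      ring
  have h7 := h4.symm.trans h5
  rw [← Complex.ofReal_tsum] at h7
  have h6 : ((6 / Real.pi^2 : ℝ) : ℂ) = 6 / (Real.pi:ℂ)^2 := by push_cast; ring
  rw [← h6] at h7
  exact_mod_cast h7.symm

lemma regroup {M : Type*} [AddCommMonoid M] (n : ℕ) (F : ℕ × ℕ → M) :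
    ∑ k ∈ Icc 1 n, ∑ x ∈ k.divisorsAntidiagonal, F x
      = ∑ d ∈ Icc 1 n, ∑ e ∈ Icc 1 (n / d), F (d, e) := by
  have hset : ∀ d ∈ Icc 1 n, Icc 1 (n / d) = (Icc 1 n).filter (fun e => d * e ≤ n) := by
    intro d hd
    rw [mem_Icc] at hd
    have hd0 : 0 < d := hd.1
    ext e
    simp only [mem_Icc, mem_filter]
    constructor
    · rintro ⟨h1, h2⟩
      have h3 : e * d ≤ n := (Nat.le_div_iff_mul_le hd0).mp h2
      exact ⟨⟨h1, le_trans h2 (Nat.div_le_self n d)⟩, by rw [mul_comm]; exact h3⟩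
    · rintro ⟨⟨h1, _⟩, h3⟩
      exact ⟨h1, (Nat.le_div_iff_mul_le hd0).mpr (by rw [mul_comm]; exact h3)⟩
  have key : ((Icc 1 n).biUnion fun k => k.divisorsAntidiagonal)
      = ((Icc 1 n) ×ˢ (Icc 1 n)).filter (fun p => p.1 * p.2 ≤ n) := by
    ext p
    simp only [mem_biUnion, Nat.mem_divisorsAntidiagonal, mem_filter, mem_product, mem_Icc]
    constructor
    · rintro ⟨k, hk, hpk, hk0⟩
      have hne : p.1 ≠ 0 ∧ p.2 ≠ 0 := mul_ne_zero_iff.mp (hpk ▸ hk0)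
      have hle : p.1 * p.2 ≤ n := hpk ▸ hk.2
      refine ⟨⟨⟨by omega, ?_⟩, by omega, ?_⟩, hle⟩
      · calc p.1 ≤ p.1 * p.2 := Nat.le_mul_of_pos_right _ (by omega)
          _ ≤ n := hle
      · calc p.2 ≤ p.1 * p.2 := Nat.le_mul_of_pos_left _ (by omega)
          _ ≤ n := hle
    · rintro ⟨⟨⟨h1, _⟩, h2, _⟩, h5⟩
      exact ⟨p.1 * p.2, ⟨Nat.one_le_iff_ne_zero.mpr (by positivity), h5⟩, rfl, by positivity⟩
  have hdisj : ∀ k1 ∈ (Icc 1 n : Finset ℕ), ∀ k2 ∈ (Icc 1 n : Finset ℕ), k1 ≠ k2 →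
      Disjoint (k1.divisorsAntidiagonal) (k2.divisorsAntidiagonal) := by
    intro k1 _ k2 _ hne
    simp only [Finset.disjoint_left, Nat.mem_divisorsAntidiagonal]
    rintro p ⟨rfl, -⟩ ⟨h, -⟩
    subst h; exact hne rfl
  calc ∑ k ∈ Icc 1 n, ∑ x ∈ k.divisorsAntidiagonal, F x
      = ∑ x ∈ (Icc 1 n).biUnion (fun k => k.divisorsAntidiagonal), F x :=
        (Finset.sum_biUnion hdisj).symm
    _ = ∑ x ∈ ((Icc 1 n) ×ˢ (Icc 1 n)).filter (fun p => p.1 * p.2 ≤ n), F x := by rw [key]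
    _ = ∑ d ∈ Icc 1 n, ∑ e ∈ (Icc 1 n).filter (fun e => d * e ≤ n), F (d, e) := by
        rw [Finset.sum_filter, Finset.sum_product]
        simp [Finset.sum_filter]
    _ = ∑ d ∈ Icc 1 n, ∑ e ∈ Icc 1 (n / d), F (d, e) :=
        (Finset.sum_congr rfl fun d hd => by rw [hset d hd]).symm

lemma totient_sum_eq (n : ℕ) :
    ∑ k ∈ Icc 1 n, (Nat.totient k : ℤ)
      = ∑ d ∈ Icc 1 n, (moebius d : ℤ) * ∑ e ∈ Icc 1 (n / d), (e : ℤ) := by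
  have hinv := (sum_eq_iff_sum_mul_moebius_eq (R := ℤ)
      (f := fun k => (Nat.totient k : ℤ)) (g := fun k => (k : ℤ))).mp ?_
  · calc ∑ k ∈ Icc 1 n, (Nat.totient k : ℤ)
        = ∑ k ∈ Icc 1 n, ∑ x ∈ k.divisorsAntidiagonal, (moebius x.1 : ℤ) * (x.2 : ℤ) := by
          refine Finset.sum_congr rfl fun k hk => ?_
          rw [mem_Icc] at hk
          exact (hinv k (by omega)).symm
      _ = ∑ d ∈ Icc 1 n, ∑ e ∈ Icc 1 (n / d), (moebius d : ℤ) * (e : ℤ) :=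
          regroup n (fun p => (moebius p.1 : ℤ) * (p.2 : ℤ))
      _ = _ := by simp [Finset.mul_sum]
  · intro m hm
    exact_mod_cast congrArg (Nat.cast : ℕ → ℤ) (Nat.sum_totient m)

def fareyAux (n : ℕ) : Finset ℚ :=
  (Icc 1 n).biUnion
    (fun b => ((range b).filter (fun a => b.Coprime a)).image (fun a : ℕ => (a : ℚ)/b))

lemma num_den_of_mem {a b : ℕ} (hb : 0 < b) (hab : b.Coprime a) :
    ((a : ℚ)/b).num = a ∧ ((a : ℚ)/b).den = b := by
  have hb' : (0:ℤ) < (b:ℤ) := by exact_mod_cast hb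
  have hcop : Nat.Coprime ((a:ℤ)).natAbs ((b:ℤ)).natAbs := by
    simpa using hab.symm
  constructor
  · have := Rat.num_div_eq_of_coprime hb' hcop
    simpa using this
  · have := Rat.den_div_eq_of_coprime hb' hcop
    simpa using this

lemma fareyAux_card (n : ℕ) : (fareyAux n).card = ∑ b ∈ Icc 1 n, Nat.totient b := by
  rw [fareyAux, Finset.card_biUnion]
  · refine Finset.sum_congr rfl fun b hb => ?_
    rw [mem_Icc] at hb
    rw [Finset.card_image_of_injOn, Nat.totient_eq_card_coprime]
    intro a ha a' ha' h
    simp only [mem_coe, mem_filter, mem_range] at ha ha'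
    have h1 := (num_den_of_mem hb.1 ha.2).1
    have h2 := (num_den_of_mem hb.1 ha'.2).1
    simp only at h
    rw [h] at h1
    exact_mod_cast h1.symm.trans h2
  · intro b1 hb1 b2 hb2 hne
    rw [mem_coe, mem_Icc] at hb1 hb2
    simp only [Finset.disjoint_left, mem_image, mem_filter, mem_range]
    rintro q ⟨a, ⟨ha, hcop⟩, rfl⟩ ⟨a', ⟨ha', hcop'⟩, hq⟩
    have h1 := (num_den_of_mem hb1.1 hcop).2
    have h2 := (num_den_of_mem hb2.1 hcop').2
    rw [hq] at h2
    exact hne (h1.symm.trans h2)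

lemma one_not_mem_fareyAux (n : ℕ) : (1:ℚ) ∉ fareyAux n := by
  simp only [fareyAux, mem_biUnion, mem_image, mem_filter, mem_range, mem_Icc]
  rintro ⟨b, hb, a, ⟨ha, hcop⟩, hq⟩
  have hb0 : 0 < b := hb.1
  have hlt : ((a:ℚ)/b) < 1 := by
    rw [div_lt_one (by exact_mod_cast hb0)]
    exact_mod_cast ha
  rw [hq] at hlt
  exact lt_irrefl _ hlt

lemma farey_eq (n : ℕ) (hn : 1 ≤ n) : farey n = ↑(insert (1:ℚ) (fareyAux n)) := by
  ext q
  simp only [farey, Set.mem_setOf_eq, coe_insert, Set.mem_insert_iff, mem_coe, fareyAux,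
    mem_biUnion, mem_image, mem_filter, mem_range, mem_Icc]
  constructor
  · rintro ⟨h0, h1, hden⟩
    rcases eq_or_lt_of_le h1 with rfl | h1
    · exact Or.inl rfl
    · have hnum0 : 0 ≤ q.num := Rat.num_nonneg.mpr h0
      have hnd : q.num < q.den := by
        by_contra hc
        push_neg at hc
        have h2 : (1:ℚ) ≤ q := by
          rw [← Rat.num_div_den q, le_div_iff₀ (by exact_mod_cast q.pos), one_mul]
          exact_mod_cast hc
        linarith
      refine Or.inr ⟨q.den, ⟨q.pos, hden⟩, q.num.toNat, ⟨by omega, ?hc⟩, ?he⟩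
      case hc =>
        have := q.reduced
        rwa [show q.num.natAbs = q.num.toNat by omega, Nat.coprime_comm] at this
      case he =>
        rw [show ((q.num.toNat : ℚ)) = (q.num : ℚ) by
          exact_mod_cast congrArg (Int.cast : ℤ → ℚ) (Int.toNat_of_nonneg hnum0)]
        exact Rat.num_div_den q
  · rintro (rfl | ⟨b, hb, a, ⟨ha, hcop⟩, rfl⟩)
    · exact ⟨by norm_num, le_refl 1, by simpa using hn⟩
    · have hb0 : (0:ℚ) < b := by exact_mod_cast hb.1
      refine ⟨by positivity, ?_, ?_⟩
      · rw [div_le_one hb0]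
        exact_mod_cast ha.le
      · rw [(num_den_of_mem hb.1 hcop).2]
        exact hb.2

lemma farey_ncard (n : ℕ) (hn : 1 ≤ n) :
    (farey n).ncard = 1 + ∑ b ∈ Icc 1 n, Nat.totient b := by
  rw [farey_eq n hn, Set.ncard_coe_finset,
    Finset.card_insert_of_notMem (one_not_mem_fareyAux n), fareyAux_card, add_comm]

/-! ### Analytic part -/

noncomputable def fN (n d : ℕ) : ℝ :=
  if d ∈ Icc 1 n then (moebius d : ℝ) * (((n/d : ℕ) : ℝ) * (((n/d : ℕ) : ℝ) + 1) / 2) / (n:ℝ)^2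
  else 0

lemma gauss_real (q : ℕ) : (∑ e ∈ Icc 1 q, (e:ℝ)) = (q:ℝ) * ((q:ℝ) + 1) / 2 := by
  induction q with
  | zero => simp
  | succ q ih =>
    rw [Finset.sum_Icc_succ_top (by omega)]
    push_cast
    rw [ih]
    ring

lemma div_nat_tendsto (d : ℕ) (hd : 0 < d) :
    Tendsto (fun n : ℕ => ((n / d : ℕ) : ℝ) / n) atTop (nhds (1 / d)) := by
  have h0 : Tendsto (fun n : ℕ => ((n % d : ℕ) : ℝ) / ((d:ℝ) * n)) atTop (nhds 0) := by
    apply squeeze_zero (fun n => by positivity) (fun n => ?_) tendsto_one_div_atTop_nhds_zero_nat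
    rcases Nat.eq_zero_or_pos n with rfl | hn
    · simp
    · rw [div_le_div_iff₀ (by positivity) (by exact_mod_cast hn)]
      have h1 : ((n % d : ℕ) : ℝ) ≤ (d:ℝ) := by
        exact_mod_cast (Nat.mod_lt n hd).le
      have h2 : (0:ℝ) ≤ (n:ℝ) := by positivity
      nlinarith
  have heq : ∀ᶠ n : ℕ in atTop,
      1/(d:ℝ) - ((n % d : ℕ):ℝ)/((d:ℝ)*n) = ((n / d : ℕ) : ℝ) / n := by
    filter_upwards [eventually_ge_atTop 1] with n hn
    have hmod : (d:ℝ) * ((n/d : ℕ):ℝ) + ((n % d:ℕ):ℝ) = (n:ℝ) := by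
      exact_mod_cast Nat.div_add_mod n d
    have hn0 : (n:ℝ) ≠ 0 := by
      have : (0:ℝ) < n := by exact_mod_cast hn
      positivity
    have hd0 : (d:ℝ) ≠ 0 := by positivity
    field_simp
    linear_combination (-1:ℝ) * hmod
  have := (tendsto_const_nhds (x := 1/(d:ℝ)) (f := atTop)).sub h0
  rw [sub_zero] at this
  exact this.congr' heq

lemma fN_tendsto (d : ℕ) :
    Tendsto (fun n => fN n d) atTop (nhds ((moebius d : ℝ) / (d:ℝ)^2 / 2)) := by
  rcases Nat.eq_zero_or_pos d with rfl | hd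
  · simp only [fN, mem_Icc]
    have : ∀ n : ℕ, ¬ (1 ≤ (0:ℕ) ∧ (0:ℕ) ≤ n) := by omega
    simp [this]
  · have h1 := div_nat_tendsto d hd
    have h2 : Tendsto (fun n : ℕ => (moebius d : ℝ) *
        (((n/d : ℕ):ℝ)/n * (((n/d : ℕ):ℝ)/n + 1/n)) / 2) atTop
        (nhds ((moebius d : ℝ) * (1/(d:ℝ) * (1/(d:ℝ) + 0)) / 2)) :=
      (((h1.mul (h1.add tendsto_one_div_atTop_nhds_zero_nat)).const_mul _).div_const 2)
    have hval : (moebius d : ℝ) * (1/(d:ℝ) * (1/(d:ℝ) + 0)) / 2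
        = (moebius d : ℝ) / (d:ℝ)^2 / 2 := by
      rw [add_zero]
      ring
    rw [hval] at h2
    apply h2.congr'
    filter_upwards [eventually_ge_atTop d, eventually_ge_atTop 1] with n hnd hn1
    have hn0 : (n:ℝ) ≠ 0 := by
      have : (0:ℝ) < n := by exact_mod_cast hn1
      positivity
    rw [fN, if_pos (mem_Icc.mpr ⟨hd, hnd⟩)]
    field_simp

lemma fN_bound (n d : ℕ) : |fN n d| ≤ 1/(d:ℝ)^2 := by
  rcases Nat.eq_zero_or_pos d with rfl | hd
  · have : fN n 0 = 0 := by simp [fN]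
    simp [this]
  · by_cases hmem : d ∈ Icc 1 n
    · rw [mem_Icc] at hmem
      have hn1 : 1 ≤ n := le_trans hmem.1 hmem.2
      have hn0 : (0:ℝ) < (n:ℝ) := by exact_mod_cast hn1
      have hd0 : (0:ℝ) < (d:ℝ) := by exact_mod_cast hd
      set q : ℕ := n / d with hq
      have hq1 : 1 ≤ q := (Nat.one_le_div_iff hd).mpr hmem.2
      have hq1' : (1:ℝ) ≤ (q:ℝ) := by exact_mod_cast hq1
      have hqle : (q:ℝ) * (d:ℝ) ≤ (n:ℝ) := by
        exact_mod_cast Nat.div_mul_le_self n d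
      have hmu : |(moebius d : ℝ)| ≤ 1 := by
        have := abs_moebius_le_one (n := d)
        exact_mod_cast this
      rw [fN, if_pos (mem_Icc.mpr hmem)]
      rw [abs_div, abs_mul, abs_of_pos (by positivity : (0:ℝ) < (n:ℝ)^2)]
      have hkey : |(q:ℝ) * ((q:ℝ) + 1) / 2| ≤ (n:ℝ)^2 / (d:ℝ)^2 := by
        rw [abs_of_nonneg (by positivity)]
        have h1 : (q:ℝ) * ((q:ℝ) + 1) / 2 ≤ (q:ℝ)^2 := by nlinarith
        have h2 : (q:ℝ)^2 ≤ (n:ℝ)^2 / (d:ℝ)^2 := by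
          rw [le_div_iff₀ (by positivity)]
          nlinarith [sq_nonneg ((q:ℝ) * (d:ℝ)), mul_le_mul hqle hqle (by positivity) (le_of_lt hn0)]
        linarith
      calc |(moebius d : ℝ)| * |(q:ℝ) * ((q:ℝ) + 1) / 2| / (n:ℝ)^2
          ≤ 1 * ((n:ℝ)^2 / (d:ℝ)^2) / (n:ℝ)^2 := by
            apply div_le_div_of_nonneg_right ?_ (by positivity)
            exact mul_le_mul hmu hkey (abs_nonneg _) zero_le_one
        _ = 1/(d:ℝ)^2 := by
            field_simp
    · rw [fN, if_neg hmem]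
      simp only [abs_zero]
      positivity

theorem farey_card_asymptotic :
    Filter.Tendsto (fun n : ℕ => ((farey n).ncard : ℝ) / (n : ℝ)^2)
      Filter.atTop (nhds (3 / Real.pi^2)) := by
  have hsum : Summable (fun d : ℕ => 1/(d:ℝ)^2) :=
    Real.summable_one_div_nat_pow.mpr one_lt_two
  have hbd : ∀ᶠ n in atTop, ∀ d, ‖fN n d‖ ≤ 1/(d:ℝ)^2 :=
    Filter.Eventually.of_forall (fun n d => by
      simpa [Real.norm_eq_abs] using fN_bound n d)
  have hT := tendsto_tsum_of_dominated_convergence hsum fN_tendsto hbd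
  have hval : (∑' d : ℕ, (moebius d : ℝ)/(d:ℝ)^2/2) = 3/Real.pi^2 := by
    rw [tsum_div_const, moebius_tsum_sq]
    ring
  rw [hval] at hT
  have h0 : Tendsto (fun n : ℕ => 1/(n:ℝ)^2) atTop (nhds 0) := by
    apply squeeze_zero' (Filter.Eventually.of_forall fun n => by positivity) ?_
      tendsto_one_div_atTop_nhds_zero_nat
    filter_upwards [eventually_ge_atTop 1] with n hn
    have hn' : (1:ℝ) ≤ n := by exact_mod_cast hn
    apply one_div_le_one_div_of_le (by linarith)
    nlinarith
  have hfinal := h0.add hT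
  rw [zero_add] at hfinal
  apply hfinal.congr'
  filter_upwards [eventually_ge_atTop 1] with n hn
  have hn0 : (n:ℝ) ≠ 0 := by
    have : (1:ℝ) ≤ n := by exact_mod_cast hn
    positivity
  have htsum : ∑' d, fN n d = (∑ k ∈ Icc 1 n, (Nat.totient k : ℝ)) / (n:ℝ)^2 := by
    rw [tsum_eq_sum (s := Icc 1 n) (fun d hd => by rw [fN, if_neg hd])]
    have hstep : ∑ d ∈ Icc 1 n, fN n d
        = (∑ d ∈ Icc 1 n, (moebius d : ℝ) * (((n/d:ℕ):ℝ)*(((n/d:ℕ):ℝ)+1)/2)) / (n:ℝ)^2 := by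
      rw [Finset.sum_div]
      exact Finset.sum_congr rfl fun d hd => by rw [fN, if_pos hd]
    rw [hstep]
    congr 1
    have hZ := totient_sum_eq n
    have hR := congrArg (fun z : ℤ => (z : ℝ)) hZ
    push_cast at hR
    rw [hR]
    exact Finset.sum_congr rfl fun d _ => by rw [gauss_real]
  rw [farey_ncard n hn]
  push_cast
  rw [add_div, htsum]
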